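/- arXiv:1811.06615 — 3 statements merged into one kernel-verified Lean document; each statement's English description precedes it below -/
import Mathlib

section
/- For every u ∈ H^α(S_ε) with α ∈ (0,1), the Gagliardo semi-norms satisfy the exact rescaling identity ‖T^b_ε(u)‖'_{L²(Ω; H^α(S))} = ε^{1/2+α} ‖u‖'_{H^α(S_ε)}. -/
open MeasureTheory ENNReal Filter Topology Classical

noncomputable section

/-- Points of `ℝ³`. -/
abbrev V3 : Type := Fin 3 → ℝ

/-- The open reference cell `Y = (0,1)³`. -/
def Ycube : Set V3 := {y | ∀ i, 0 < y i ∧ y i < 1}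

/-- The open cell `εξ + εY`. -/
def cellOf (ε : ℝ) (ξ : Fin 3 → ℤ) : Set V3 :=
  {x | ∀ i, ε * (ξ i : ℝ) < x i ∧ x i < ε * (ξ i : ℝ) + ε}

/-- `Ξ_ε = {ξ ∈ ℤ³ : εξ + εY ⊆ Ω}`. -/
def Xi (ε : ℝ) (Ω : Set V3) : Set (Fin 3 → ℤ) := {ξ | cellOf ε ξ ⊆ Ω}

/-- `Ω̂_ε`, the interior of the union of the closed cells contained in `Ω`. -/
def OmHat (ε : ℝ) (Ω : Set V3) : Set V3 :=
  interior (⋃ ξ ∈ Xi ε Ω, closure (cellOf ε ξ))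

/-- `ε[x/ε]`, componentwise. -/
def floorPt (ε : ℝ) (x : V3) : V3 := fun i => ε * (⌊x i / ε⌋ : ℝ)

/-- `{x/ε}`, the fractional part, componentwise. -/
def fracPt (ε : ℝ) (x : V3) : V3 := fun i => x i / ε - (⌊x i / ε⌋ : ℝ)

/-- The (boundary) unfolding operator `T_ε(φ)(x,y) = φ(ε[x/ε] + εy)` on `Ω̂_ε`, `0` elsewhere. -/
def unfoldOp {α : Type*} [Zero α] (ε : ℝ) (Ω : Set V3) (φ : V3 → α) : V3 × V3 → α :=
  fun p => if p.1 ∈ OmHat ε Ω then φ (floorPt ε p.1 + ε • p.2) else 0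

/-- `S_ε = {x ∈ Ω̂_ε : {x/ε} ∈ S}`. -/
def Seps (ε : ℝ) (Ω : Set V3) (S : Set V3) : Set V3 :=
  {x ∈ OmHat ε Ω | fracPt ε x ∈ S}

/-- The cracked domain `Ω*_ε = Ω \ S_ε`. -/
def OmStar (ε : ℝ) (Ω S : Set V3) : Set V3 := Ω \ Seps ε Ω S

/-- Squared Gagliardo semi-norm of order `α` on a surface `A`, with surface measure `μH[2]`. -/
def gaglSq (α : ℝ) (A : Set V3) (v : V3 → ℝ) : ℝ≥0∞ :=
  ∫⁻ x in A, ∫⁻ y in A, ENNReal.ofReal ((v x - v y) ^ 2 / dist x y ^ (2 + 2 * α)) ∂μH[2] ∂μH[2]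

/-- The crack `εξ + εS` in the cell `εξ + εY`. -/
def cellCrack (ε : ℝ) (ξ : Fin 3 → ℤ) (S : Set V3) : Set V3 :=
  (fun y : V3 => (fun i => ε * (ξ i : ℝ) + ε * y i : V3)) '' S

/-- Cell-wise squared Gagliardo semi-norm on `S_ε`: the sum over the connected components. -/
def gaglSqSeps (ε α : ℝ) (Ω S : Set V3) (v : V3 → ℝ) : ℝ≥0∞ :=
  ∑' ξ : Xi ε Ω, gaglSq α (cellCrack ε (↑ξ) S) v


namespace Stmt3Aux

/-- The affine map `y ↦ c + ε • y`. -/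
def aff (c : V3) (ε : ℝ) : V3 → V3 := fun y => c + ε • y

lemma aff_dist (c : V3) {ε : ℝ} (hε : 0 ≤ ε) (x y : V3) :
    dist (aff c ε x) (aff c ε y) = ε * dist x y := by
  simp [aff, dist_smul₀, abs_of_nonneg hε]

lemma aff_lipschitz (c : V3) {ε : ℝ} (hε : 0 ≤ ε) : LipschitzWith ε.toNNReal (aff c ε) :=
  LipschitzWith.of_dist_le_mul fun x y => by
    rw [aff_dist c hε, Real.coe_toNNReal _ hε]

lemma aff_leftInv (c : V3) {ε : ℝ} (hε : ε ≠ 0) (y : V3) :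
    aff (-(ε⁻¹ • c)) ε⁻¹ (aff c ε y) = y := by
  simp [aff, smul_add, smul_smul, inv_mul_cancel₀ hε]

lemma haus_aff (c : V3) {ε : ℝ} (hε : 0 < ε) {d : ℝ} (hd : 0 ≤ d) (A : Set V3) :
    μH[d] (aff c ε '' A) = ENNReal.ofReal (ε ^ d) * μH[d] A := by
  have hco : ((ε.toNNReal : ℝ≥0∞)) ^ d = ENNReal.ofReal (ε ^ d) := by
    rw [← ENNReal.ofReal_rpow_of_pos hε]; rfl
  have h1 := (aff_lipschitz c hε.le).hausdorffMeasure_image_le hd A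
  have h2 := (aff_lipschitz (-(ε⁻¹ • c)) (by positivity : (0:ℝ) ≤ ε⁻¹)).hausdorffMeasure_image_le
      hd (aff c ε '' A)
  rw [hco] at h1
  have himg : aff (-(ε⁻¹ • c)) ε⁻¹ '' (aff c ε '' A) = A := by
    rw [Set.image_image]
    simp [aff_leftInv c hε.ne']
  rw [himg, (by rw [← ENNReal.ofReal_rpow_of_pos (by positivity)]; rfl :
    ((ε⁻¹.toNNReal : ℝ≥0∞)) ^ d = ENNReal.ofReal (ε⁻¹ ^ d))] at h2
  refine le_antisymm h1 ?_
  calc ENNReal.ofReal (ε ^ d) * μH[d] A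
      ≤ ENNReal.ofReal (ε ^ d) * (ENNReal.ofReal (ε⁻¹ ^ d) * μH[d] (aff c ε '' A)) :=
        mul_le_mul_right h2 _
    _ = μH[d] (aff c ε '' A) := by
        rw [← mul_assoc, ← ENNReal.ofReal_mul (by positivity),
          ← Real.mul_rpow hε.le (by positivity),
          mul_inv_cancel₀ hε.ne', Real.one_rpow, ENNReal.ofReal_one, one_mul]

lemma aff_homeomorph (c : V3) {ε : ℝ} (hε : ε ≠ 0) :
    ∃ h : V3 ≃ₜ V3, ⇑h = aff c ε :=
  ⟨(Homeomorph.smulOfNeZero ε hε).trans (Homeomorph.addLeft c), rfl⟩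

lemma aff_injective (c : V3) {ε : ℝ} (hε : ε ≠ 0) : Function.Injective (aff c ε) := by
  obtain ⟨h, hh⟩ := aff_homeomorph c hε
  rw [← hh]; exact h.injective

lemma aff_surjective (c : V3) {ε : ℝ} (hε : ε ≠ 0) : Function.Surjective (aff c ε) := by
  obtain ⟨h, hh⟩ := aff_homeomorph c hε
  rw [← hh]; exact h.surjective

lemma aff_embedding (c : V3) {ε : ℝ} (hε : ε ≠ 0) : MeasurableEmbedding (aff c ε) := by
  obtain ⟨h, hh⟩ := aff_homeomorph c hε
  rw [← hh]; exact h.measurableEmbedding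

lemma restrict_image (c : V3) {ε : ℝ} (hε : 0 < ε) (S : Set V3) :
    (μH[2] : Measure V3).restrict (aff c ε '' S)
      = ENNReal.ofReal (ε ^ (2:ℝ)) • Measure.map (aff c ε) (μH[2].restrict S) := by
  ext A hA
  rw [Measure.restrict_apply hA, Measure.smul_apply, smul_eq_mul,
    Measure.map_apply (aff_embedding c hε.ne').measurable hA,
    Measure.restrict_apply ((aff_embedding c hε.ne').measurable hA),
    ← haus_aff c hε (by norm_num : (0:ℝ) ≤ 2)]
  congr 1
  rw [Set.image_inter (aff_injective c hε.ne'),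
    Set.image_preimage_eq _ (aff_surjective c hε.ne')]

lemma setLIntegral_aff (c : V3) {ε : ℝ} (hε : 0 < ε) (S : Set V3) (g : V3 → ℝ≥0∞) :
    ∫⁻ x in aff c ε '' S, g x ∂μH[2]
      = ENNReal.ofReal (ε ^ (2:ℝ)) * ∫⁻ y in S, g (aff c ε y) ∂μH[2] := by
  rw [restrict_image c hε S, lintegral_smul_measure, (aff_embedding c hε.ne').lintegral_map, smul_eq_mul]

lemma ofReal_div_scale {ε : ℝ} (hε : 0 < ε) (p a d : ℝ) (hd : 0 ≤ d) :
    ENNReal.ofReal (a / (ε * d) ^ p)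
      = ENNReal.ofReal (ε ^ (-p)) * ENNReal.ofReal (a / d ^ p) := by
  rw [Real.mul_rpow hε.le hd, Real.rpow_neg hε.le,
    ← ENNReal.ofReal_mul (by positivity)]
  congr 1
  rw [div_mul_eq_div_div_swap, div_eq_inv_mul]

lemma gagl_aff {ε : ℝ} (hε : 0 < ε) (α : ℝ) (c : V3) (S : Set V3) (u : V3 → ℝ) :
    gaglSq α (aff c ε '' S) u
      = ENNReal.ofReal (ε ^ (2:ℝ)) * (ENNReal.ofReal (ε ^ (2:ℝ)) *
          (ENNReal.ofReal (ε ^ (-(2 + 2*α))) * gaglSq α S (fun y => u (aff c ε y)))) := by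
  unfold gaglSq
  rw [setLIntegral_aff c hε]
  congr 1
  have inner : ∀ x : V3,
      (∫⁻ y in aff c ε '' S,
          ENNReal.ofReal ((u (aff c ε x) - u y) ^ 2 / dist (aff c ε x) y ^ (2 + 2*α)) ∂μH[2])
        = ENNReal.ofReal (ε ^ (2:ℝ)) * (ENNReal.ofReal (ε ^ (-(2 + 2*α))) *
            ∫⁻ y in S,
              ENNReal.ofReal ((u (aff c ε x) - u (aff c ε y)) ^ 2
                / dist x y ^ (2 + 2*α)) ∂μH[2]) := by
    intro x
    rw [setLIntegral_aff c hε]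
    congr 1
    rw [← lintegral_const_mul' _ _ ENNReal.ofReal_ne_top]
    refine lintegral_congr fun y => ?_
    rw [aff_dist c hε.le, ofReal_div_scale hε _ _ _ dist_nonneg]
  calc (∫⁻ x in S, ∫⁻ y in aff c ε '' S,
          ENNReal.ofReal ((u (aff c ε x) - u y) ^ 2
            / dist (aff c ε x) y ^ (2 + 2*α)) ∂μH[2] ∂μH[2])
      = ∫⁻ x in S, ENNReal.ofReal (ε ^ (2:ℝ)) * (ENNReal.ofReal (ε ^ (-(2 + 2*α))) *
          ∫⁻ y in S, ENNReal.ofReal ((u (aff c ε x) - u (aff c ε y)) ^ 2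
            / dist x y ^ (2 + 2*α)) ∂μH[2]) ∂μH[2] := lintegral_congr inner
    _ = _ := by
        rw [lintegral_const_mul' _ _ ENNReal.ofReal_ne_top,
          lintegral_const_mul' _ _ ENNReal.ofReal_ne_top]

lemma cell_eq_pi (ε : ℝ) (ξ : Fin 3 → ℤ) :
    cellOf ε ξ = Set.pi Set.univ (fun i => Set.Ioo (ε * (ξ i : ℝ)) (ε * (ξ i : ℝ) + ε)) := by
  ext x; simp [cellOf, Set.mem_pi]

lemma cell_open (ε : ℝ) (ξ : Fin 3 → ℤ) : IsOpen (cellOf ε ξ) := by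
  rw [cell_eq_pi]
  exact isOpen_set_pi Set.finite_univ fun i _ => isOpen_Ioo

lemma volume_cell {ε : ℝ} (hε : 0 < ε) (ξ : Fin 3 → ℤ) :
    volume (cellOf ε ξ) = ENNReal.ofReal (ε ^ (3:ℝ)) := by
  rw [cell_eq_pi, volume_pi_pi]
  simp only [Real.volume_Ioo, add_sub_cancel_left]
  rw [Finset.prod_const, ← ENNReal.ofReal_pow hε.le]
  norm_num

lemma floor_of_mem_cell {ε : ℝ} (hε : 0 < ε) {ξ : Fin 3 → ℤ} {x : V3}
    (hx : x ∈ cellOf ε ξ) (i : Fin 3) : ⌊x i / ε⌋ = ξ i := by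
  obtain ⟨h1, h2⟩ := hx i
  rw [Int.floor_eq_iff]
  constructor
  · rw [le_div_iff₀ hε]; linarith [h1]
  · rw [div_lt_iff₀ hε]; push_cast; linarith [h2]

lemma floorPt_of_mem_cell {ε : ℝ} (hε : 0 < ε) {ξ : Fin 3 → ℤ} {x : V3}
    (hx : x ∈ cellOf ε ξ) : floorPt ε x = fun i => ε * (ξ i : ℝ) := by
  funext i; rw [floorPt, floor_of_mem_cell hε hx i]

lemma cell_disjoint {Ω : Set V3} {ε : ℝ} (hε : 0 < ε) :
    Pairwise (Function.onFun Disjoint fun ξ : Xi ε Ω => cellOf ε (ξ : Fin 3 → ℤ)) := by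
  intro ξ η hne
  rw [Function.onFun, Set.disjoint_left]
  intro x hxξ hxη
  refine hne (Subtype.ext (funext fun i => ?_))
  rw [← floor_of_mem_cell hε hxξ i, ← floor_of_mem_cell hε hxη i]

lemma cell_subset_OmHat {ε : ℝ} {Ω : Set V3} {ξ : Fin 3 → ℤ} (hξ : ξ ∈ Xi ε Ω) :
    cellOf ε ξ ⊆ OmHat ε Ω := by
  refine interior_maximal ?_ (cell_open ε ξ)
  exact subset_closure.trans (Set.subset_biUnion_of_mem (u := fun ξ => closure (cellOf ε ξ)) hξ)

lemma closure_cell_subset (ε : ℝ) (ξ : Fin 3 → ℤ) :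
    closure (cellOf ε ξ) ⊆ {x : V3 | ∀ i, ε * (ξ i : ℝ) ≤ x i ∧ x i ≤ ε * (ξ i : ℝ) + ε} := by
  have h : {x : V3 | ∀ i, ε * (ξ i : ℝ) ≤ x i ∧ x i ≤ ε * (ξ i : ℝ) + ε}
      = Set.pi Set.univ (fun i => Set.Icc (ε * (ξ i : ℝ)) (ε * (ξ i : ℝ) + ε)) := by
    ext x; simp [Set.mem_pi, Pi.le_def, forall_and]
  rw [h]
  refine closure_minimal ?_ (isClosed_set_pi fun i _ => isClosed_Icc)
  intro x hx i _
  exact ⟨(hx i).1.le, (hx i).2.le⟩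

lemma vol_grid {ε : ℝ} : volume {x : V3 | ∃ i, ∃ n : ℤ, x i = ε * n} = 0 := by
  have h : {x : V3 | ∃ i, ∃ n : ℤ, x i = ε * n}
      = ⋃ i, ⋃ n : ℤ, {x : V3 | x i = ε * n} := by
    ext x; simp
  rw [h]
  refine measure_iUnion_null fun i => measure_iUnion_null fun n => ?_
  have h2 := MeasureTheory.Measure.pi_hyperplane (fun _ : Fin 3 => (volume : Measure ℝ)) i (ε * n)
  simpa [MeasureTheory.volume_pi] using h2

lemma decomp {ε : ℝ} {Ω : Set V3} (hε : 0 < ε) :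
    OmHat ε Ω ∩ (Ω \ {x : V3 | ∃ i, ∃ n : ℤ, x i = ε * n})
      = ⋃ ξ : Xi ε Ω, cellOf ε (ξ : Fin 3 → ℤ) := by
  ext x
  constructor
  · rintro ⟨hOm, hΩ, hN⟩
    have hx : x ∈ ⋃ ξ ∈ Xi ε Ω, closure (cellOf ε ξ) := interior_subset hOm
    simp only [Set.mem_iUnion] at hx ⊢
    obtain ⟨ξ, hξ, hcl⟩ := hx
    refine ⟨⟨ξ, hξ⟩, fun i => ?_⟩
    obtain ⟨h1, h2⟩ := closure_cell_subset ε ξ hcl i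
    constructor
    · rcases h1.lt_or_eq with h | h
      · exact h
      · exact absurd ⟨i, ξ i, h.symm⟩ hN
    · rcases h2.lt_or_eq with h | h
      · exact h
      · refine absurd ⟨i, ξ i + 1, ?_⟩ hN
        push_cast
        linarith
  · rintro hx
    simp only [Set.mem_iUnion] at hx
    obtain ⟨⟨ξ, hξ⟩, hx⟩ := hx
    refine ⟨cell_subset_OmHat hξ hx, hξ hx, ?_⟩
    rintro ⟨i, n, hn⟩
    obtain ⟨h1, h2⟩ := hx i
    rw [hn] at h1 h2
    have l1 : (ξ i : ℝ) < n := (mul_lt_mul_iff_right₀ hε).mp h1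
    have l2 : (n : ℝ) < ξ i + 1 := by
      rw [(by ring : ε * (ξ i : ℝ) + ε = ε * ((ξ i : ℝ) + 1))] at h2
      exact (mul_lt_mul_iff_right₀ hε).mp h2
    have l1' : ξ i < n := by exact_mod_cast l1
    have l2' : n < ξ i + 1 := by exact_mod_cast l2
    omega

end Stmt3Aux

open Stmt3Aux in
/-- For `u ∈ H^α(S_ε)`, `α ∈ (0,1)`, the Gagliardo semi-norms satisfy the
exact rescaling identity `‖T^b_ε(u)‖'_{L²(Ω;H^α(S))} = ε^{1/2+α} ‖u‖'_{H^α(S_ε)}`. -/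
theorem statement3
    (Ω S : Set V3) (hΩo : IsOpen Ω) (hΩb : Bornology.IsBounded Ω)
    (hScl : IsClosed S) (hSY : S ⊆ Ycube)
    (ε : ℝ) (hε : 0 < ε) (α : ℝ) (hα : α ∈ Set.Ioo (0 : ℝ) 1)
    (u : V3 → ℝ)
    (hu2 : MemLp u 2 (μH[2].restrict (Seps ε Ω S)))
    (huα : gaglSqSeps ε α Ω S u ≠ ⊤) :
    (∫⁻ x in Ω, gaglSq α S (fun y => unfoldOp ε Ω u (x, y)) ∂volume) ^ ((1 : ℝ) / 2)
      = ENNReal.ofReal (ε ^ ((1 : ℝ) / 2 + α)) * (gaglSqSeps ε α Ω S u) ^ ((1 : ℝ) / 2) := by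
  obtain ⟨hα0, hα1⟩ := hα
  set N : Set V3 := {x : V3 | ∃ i, ∃ n : ℤ, x i = ε * n} with hN
  set F : V3 → ℝ≥0∞ := fun x => gaglSq α S (fun y => unfoldOp ε Ω u (x, y)) with hF
  have hF0 : ∀ x ∉ OmHat ε Ω, F x = 0 := by
    intro x hx
    simp [hF, gaglSq, unfoldOp, hx]
  have hOmMeas : MeasurableSet (OmHat ε Ω) := isOpen_interior.measurableSet
  have cellval : ∀ ξ : Xi ε Ω, (∫⁻ x in cellOf ε (ξ : Fin 3 → ℤ), F x ∂volume)
      = ENNReal.ofReal (ε ^ ((1:ℝ) + 2*α)) * gaglSq α (cellCrack ε (ξ : Fin 3 → ℤ) S) u := by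
    intro ξ
    set c : V3 := fun i => ε * ((ξ : Fin 3 → ℤ) i : ℝ) with hc
    have hcongr : ∀ x ∈ cellOf ε (ξ : Fin 3 → ℤ),
        F x = gaglSq α S (fun y => u (aff c ε y)) := by
      intro x hx
      have hxOm : x ∈ OmHat ε Ω := cell_subset_OmHat ξ.2 hx
      have heq : (fun y => unfoldOp ε Ω u (x, y)) = fun y => u (aff c ε y) := by
        funext y
        simp only [unfoldOp, hxOm, if_pos, aff]
        rw [floorPt_of_mem_cell hε hx]
      show gaglSq α S (fun y => unfoldOp ε Ω u (x, y)) = _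
      rw [heq]
    rw [setLIntegral_congr_fun (cell_open ε _).measurableSet hcongr,
      setLIntegral_const, volume_cell hε, mul_comm]
    have himg : cellCrack ε (ξ : Fin 3 → ℤ) S = aff c ε '' S := by
      unfold cellCrack
      refine Set.image_congr' (fun y => ?_)
      funext i
      simp [aff, hc]
    rw [himg, gagl_aff hε α c S u, ← mul_assoc, ← mul_assoc, ← mul_assoc,
      ← ENNReal.ofReal_mul (by positivity), ← ENNReal.ofReal_mul (by positivity),
      ← ENNReal.ofReal_mul (by positivity),
      ← Real.rpow_add hε, ← Real.rpow_add hε, ← Real.rpow_add hε]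
    congr 2
    ring
  have key : (∫⁻ x in Ω, F x ∂volume)
      = ENNReal.ofReal (ε ^ ((1:ℝ) + 2*α)) * gaglSqSeps ε α Ω S u := by
    have step1 : (∫⁻ x in Ω, F x ∂volume) = ∫⁻ x in Ω \ N, F x ∂volume := by
      refine setLIntegral_congr ?_
      exact (MeasureTheory.diff_ae_eq_self.mpr
        (measure_mono_null Set.inter_subset_right vol_grid)).symm
    have hind : ∀ x, F x = (OmHat ε Ω).indicator F x := by
      intro x
      by_cases hx : x ∈ OmHat ε Ω
      · rw [Set.indicator_of_mem hx]
      · rw [Set.indicator_of_notMem hx, hF0 x hx]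
    calc (∫⁻ x in Ω, F x ∂volume)
        = ∫⁻ x in Ω \ N, F x ∂volume := step1
      _ = ∫⁻ x in Ω \ N, (OmHat ε Ω).indicator F x ∂volume := lintegral_congr fun x => hind x
      _ = ∫⁻ x in OmHat ε Ω, F x ∂(volume.restrict (Ω \ N)) := lintegral_indicator hOmMeas F
      _ = ∫⁻ x in OmHat ε Ω ∩ (Ω \ N), F x ∂volume := by
          rw [Measure.restrict_restrict hOmMeas]
      _ = ∫⁻ x in ⋃ ξ : Xi ε Ω, cellOf ε (ξ : Fin 3 → ℤ), F x ∂volume := by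
          rw [decomp hε]
      _ = ∑' ξ : Xi ε Ω, ∫⁻ x in cellOf ε (ξ : Fin 3 → ℤ), F x ∂volume :=
          lintegral_iUnion (fun ξ => (cell_open ε _).measurableSet) (cell_disjoint hε) F
      _ = ∑' ξ : Xi ε Ω, ENNReal.ofReal (ε ^ ((1:ℝ) + 2*α))
            * gaglSq α (cellCrack ε (ξ : Fin 3 → ℤ) S) u := tsum_congr cellval
      _ = ENNReal.ofReal (ε ^ ((1:ℝ) + 2*α)) * gaglSqSeps ε α Ω S u := by
          rw [ENNReal.tsum_mul_left]; rfl
  rw [key, ENNReal.mul_rpow_of_nonneg _ _ (by norm_num : (0:ℝ) ≤ 1/2)]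
  congr 1
  rw [ENNReal.ofReal_rpow_of_pos (Real.rpow_pos_of_pos hε _), ← Real.rpow_mul hε.le]
  congr 1
  ring
end
end

section
/- The averaging operator 𝒰^b_ε is a left inverse of the boundary unfolding operator T^b_ε: for every φ ∈ L^p(S_ε), 𝒰^b_ε(T^b_ε(φ)) = φ a.e. on S_ε. -/
open MeasureTheory ENNReal Filter Topology Classical

noncomputable section

/-- The averaging (boundary) operator
`𝒰^b_ε(Φ)(x) = ∫_Y Φ(ε[x/ε]+εz, {x/ε}) dz` on `Ω̂_ε`, `0` elsewhere. -/
def avgOp (ε : ℝ) (Ω : Set V3) (Φ : V3 × V3 → ℝ) : V3 → ℝ :=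
  fun x => if x ∈ OmHat ε Ω then ∫ z in Ycube, Φ (floorPt ε x + ε • z, fracPt ε x) else 0


lemma Ycube_pi : Ycube = Set.pi Set.univ (fun _ : Fin 3 => Set.Ioo (0:ℝ) 1) := by
  ext y; simp [Ycube, Set.mem_pi, Set.mem_Ioo]

lemma cellOf_pi (ε : ℝ) (ξ : Fin 3 → ℤ) :
    cellOf ε ξ = Set.pi Set.univ (fun i => Set.Ioo (ε * (ξ i : ℝ)) (ε * (ξ i : ℝ) + ε)) := by
  ext x; simp [cellOf, Set.mem_pi, Set.mem_Ioo]

lemma isOpen_cellOf (ε : ℝ) (ξ : Fin 3 → ℤ) : IsOpen (cellOf ε ξ) := by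
  rw [cellOf_pi]; exact isOpen_set_pi Set.finite_univ (fun i _ => isOpen_Ioo)

lemma measurable_fracPt (ε : ℝ) : Measurable (fracPt ε) := by
  apply measurable_pi_lambda
  intro i
  have h1 : Measurable fun x : V3 => x i / ε := by fun_prop
  have h2 : Measurable fun x : V3 => (⌊x i / ε⌋ : ℝ) :=
    measurable_from_top.comp (Int.measurable_floor.comp h1)
  exact h1.sub h2

/-- The averaging operator `𝒰^b_ε` is a left inverse of the boundary
unfolding operator `T^b_ε`: for every `φ ∈ L^p(S_ε)`, `𝒰^b_ε(T^b_ε(φ)) = φ` a.e. on `S_ε`. -/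
theorem statement7
    (Ω S : Set V3) (hΩo : IsOpen Ω) (hΩb : Bornology.IsBounded Ω)
    (hScl : IsClosed S) (hSY : S ⊆ Ycube)
    (ε : ℝ) (hε : 0 < ε)
    (p : ℝ≥0∞) (hp1 : 1 ≤ p)
    (φ : V3 → ℝ) (hφ : MemLp φ p (μH[2].restrict (Seps ε Ω S))) :
    ∀ᵐ x ∂(μH[2].restrict (Seps ε Ω S)), avgOp ε Ω (unfoldOp ε Ω φ) x = φ x := by
  have hYm : MeasurableSet Ycube := by
    rw [Ycube_pi]
    exact (isOpen_set_pi Set.finite_univ fun i _ => isOpen_Ioo).measurableSet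
  have hSm : MeasurableSet (Seps ε Ω S) :=
    isOpen_interior.measurableSet.inter ((measurable_fracPt ε) hScl.measurableSet)
  filter_upwards [ae_restrict_mem hSm] with x hx
  obtain ⟨hxO, hxS⟩ := hx
  have hfrac : fracPt ε x ∈ Ycube := hSY hxS
  -- locate the cell of x
  have hxU : x ∈ ⋃ ξ ∈ Xi ε Ω, closure (cellOf ε ξ) := interior_subset hxO
  simp only [Set.mem_iUnion] at hxU
  obtain ⟨ξ, hξ, hxcl⟩ := hxU
  have hcl : closure (cellOf ε ξ) ⊆
      Set.pi Set.univ (fun i => Set.Icc (ε * (ξ i : ℝ)) (ε * (ξ i : ℝ) + ε)) := by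
    apply closure_minimal
    · rw [cellOf_pi]; exact Set.pi_mono fun i _ => Set.Ioo_subset_Icc_self
    · exact isClosed_set_pi fun i _ => isClosed_Icc
  have hxIcc := hcl hxcl
  have hfloor : ∀ i, ⌊x i / ε⌋ = ξ i := by
    intro i
    have h1 : ε * (ξ i : ℝ) ≤ x i := (hxIcc i (Set.mem_univ i)).1
    have h2 : x i ≤ ε * (ξ i : ℝ) + ε := (hxIcc i (Set.mem_univ i)).2
    have hf : 0 < x i / ε - (⌊x i / ε⌋ : ℝ) ∧ x i / ε - (⌊x i / ε⌋ : ℝ) < 1 := hfrac i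
    have hle : x i / ε ≤ (ξ i : ℝ) + 1 := by rw [div_le_iff₀ hε]; nlinarith
    rcases lt_or_eq_of_le hle with h | h
    · rw [Int.floor_eq_iff]
      refine ⟨by rw [le_div_iff₀ hε]; nlinarith, by exact_mod_cast h⟩
    · exfalso
      have hfl : (⌊x i / ε⌋ : ℝ) = x i / ε := by
        rw [h]
        have h3 : ((ξ i : ℝ) + 1) = ((ξ i + 1 : ℤ) : ℝ) := by push_cast; ring
        rw [h3, Int.floor_intCast]
      linarith [hf.1]
  have hXi : (fun i => ⌊x i / ε⌋) ∈ Xi ε Ω := by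
    have hfun : (fun i => ⌊x i / ε⌋) = ξ := funext hfloor
    rw [hfun]; exact hξ
  have hcellO : cellOf ε (fun i => ⌊x i / ε⌋) ⊆ OmHat ε Ω := by
    apply interior_maximal _ (isOpen_cellOf ε _)
    intro y hy
    exact Set.mem_biUnion hXi (subset_closure hy)
  have hmem : ∀ z ∈ Ycube, floorPt ε x + ε • z ∈ cellOf ε (fun i => ⌊x i / ε⌋) := by
    intro z hz i
    have hzi := hz i
    simp only [floorPt, Pi.add_apply, Pi.smul_apply, smul_eq_mul]
    constructor
    · nlinarith [hzi.1]
    · nlinarith [hzi.2]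
  have hfl2 : ∀ z ∈ Ycube, floorPt ε (floorPt ε x + ε • z) = floorPt ε x := by
    intro z hz
    funext i
    have hzi := hz i
    simp only [floorPt, Pi.add_apply, Pi.smul_apply, smul_eq_mul]
    congr 2
    have h1 : (ε * (⌊x i / ε⌋ : ℝ) + ε * z i) / ε = (⌊x i / ε⌋ : ℝ) + z i := by
      field_simp
    rw [h1, Int.floor_intCast_add, Int.floor_eq_zero_iff.2 ⟨hzi.1.le, hzi.2⟩, add_zero]
  have hxrec : floorPt ε x + ε • fracPt ε x = x := by
    funext i
    simp only [floorPt, fracPt, Pi.add_apply, Pi.smul_apply, smul_eq_mul]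
    field_simp
    ring
  simp only [avgOp, if_pos hxO]
  have heq : ∀ z ∈ Ycube, unfoldOp ε Ω φ (floorPt ε x + ε • z, fracPt ε x) = φ x := by
    intro z hz
    simp only [unfoldOp]
    rw [if_pos (hcellO (hmem z hz)), hfl2 z hz, hxrec]
  calc ∫ z in Ycube, unfoldOp ε Ω φ (floorPt ε x + ε • z, fracPt ε x)
      = ∫ _z in Ycube, φ x := setIntegral_congr_fun hYm heq
    _ = φ x := by
        rw [setIntegral_const]
        have hv : volume Ycube = 1 := by
          rw [Ycube_pi, volume_pi_pi]
          simp [Real.volume_Ioo]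
        rw [Measure.real, hv]
        simp
end
end

section
/- Let u_{ε,G₁} and u_{ε,G₂} be the solutions of the regularized contact problem with given frictions G₁, G₂ ∈ 𝒞**_ε. Then the combined energy norm satisfies N_ε(u_{ε,G₁} − u_{ε,G₂}) ≤ (C₀ / min{ᾱ,κ}) √ε ‖G₁ − G₂‖_{L²(S_ε)}, where N_ε(u)² = ‖e(u)‖²_{L²(Ω*_ε)} + ε²‖∇e(u)‖²_{L²(Ω*_ε)} and C₀ is independent of ε and κ. -/
open MeasureTheory

lemma cs_int {γ : Type*} [MeasurableSpace γ] (μ : Measure γ) (p q : γ → ℝ)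
    (hp : Integrable (fun x => p x ^ 2) μ) (hq : Integrable (fun x => q x ^ 2) μ)
    (hpq : Integrable (fun x => p x * q x) μ) :
    (∫ x, p x * q x ∂μ) ≤ Real.sqrt (∫ x, p x ^ 2 ∂μ) * Real.sqrt (∫ x, q x ^ 2 ∂μ) := by
  set A := ∫ x, p x ^ 2 ∂μ with hA
  set B := ∫ x, q x ^ 2 ∂μ with hB
  set I := ∫ x, p x * q x ∂μ with hI
  have hAnn : 0 ≤ A := integral_nonneg fun x => sq_nonneg _
  have hBnn : 0 ≤ B := integral_nonneg fun x => sq_nonneg _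
  have key : ∀ t : ℝ, 0 ≤ t ^ 2 * A - 2 * t * I + B := by
    intro t
    have h0 : 0 ≤ ∫ x, (t * p x - q x) ^ 2 ∂μ := integral_nonneg fun x => sq_nonneg _
    have e : (fun x => (t * p x - q x) ^ 2)
        = fun x => (t ^ 2 * p x ^ 2 - 2 * t * (p x * q x)) + q x ^ 2 :=
      funext fun x => by ring
    have hfint : Integrable (fun x => t ^ 2 * p x ^ 2 - 2 * t * (p x * q x)) μ :=
      (hp.const_mul _).sub (hpq.const_mul _)
    rw [e, integral_add hfint hq,
      integral_sub (hp.const_mul _) (hpq.const_mul _),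
      integral_const_mul, integral_const_mul] at h0
    linarith
  rcases le_or_gt I 0 with hI0 | hI0
  · exact hI0.trans (mul_nonneg (Real.sqrt_nonneg _) (Real.sqrt_nonneg _))
  rcases eq_or_lt_of_le hAnn with hA0 | hA0
  · exfalso
    have h := key ((B + 1) / (2 * I))
    rw [← hA0, mul_zero] at h
    have ht : ((B + 1) / (2 * I)) * I = (B + 1) / 2 := by
      field_simp
    linarith
  · have h1 := key (I / A)
    have e : A * ((I / A) ^ 2 * A - 2 * (I / A) * I + B) = A * B - I ^ 2 := by
      field_simp
      ring
    have h2 : 0 ≤ A * ((I / A) ^ 2 * A - 2 * (I / A) * I + B) := mul_nonneg hA0.le h1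
    rw [e] at h2
    have hIsq : I ^ 2 ≤ A * B := by linarith
    calc I ≤ |I| := le_abs_self I
      _ = Real.sqrt (I ^ 2) := (Real.sqrt_sq_eq_abs I).symm
      _ ≤ Real.sqrt (A * B) := Real.sqrt_le_sqrt hIsq
      _ = Real.sqrt A * Real.sqrt B := Real.sqrt_mul hAnn B

set_option maxHeartbeats 1000000 in
/-- Continuous dependence on the given friction for the regularized contact
problem.  If `u_{ε,G₁}`, `u_{ε,G₂}` solve the regularized problem with frictions
`G₁, G₂ ∈ 𝒞**_ε`, then `N_ε(u_{ε,G₁} − u_{ε,G₂}) ≤ (C₀/min{ᾱ,κ}) √ε ‖G₁−G₂‖_{L²(S_ε)}`,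
where `N_ε(u)² = ‖e(u)‖²_{L²(Ω*_ε)} + ε²‖∇e(u)‖²_{L²(Ω*_ε)}` and `C₀` is independent of `ε, κ`.

Abstract setting: `H` is the displacement space `H_ε(Ω) ∩ 𝒦_ε ⊆ K`; `Ee u = ‖e(u)‖_{L²(Ω*_ε)}`
and `Dd u = ‖∇e(u)‖_{L²(Ω*_ε)}`; `a` is the elastic form (coercive: `a(w,w) ≥ ᾱ Ee(w)²`),
`b` the regularizing form (`b(w,w) ≥ Dd(w)²`); `(γ, μ)` is the crack `S_ε` with its surface
measure, `J w` the tangential jump `[w_τ]_{S_ε}`, satisfying the jump estimate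
`‖J w‖_{L²(S_ε)} ≤ C₀ √ε Ee(w)`; the friction term is `(G, |[v_τ]|)_ε = ∫ G ‖J v‖ dμ`. -/
theorem statement13
    {H : Type*} [AddCommGroup H] [Module ℝ H]
    {γ : Type*} [MeasurableSpace γ] (μ : Measure γ)
    (K : Set H)
    (a b : H →ₗ[ℝ] H →ₗ[ℝ] ℝ) (f : H →ₗ[ℝ] ℝ)
    (Ee Dd : H → ℝ) (J : H →ₗ[ℝ] (γ → Fin 3 → ℝ))
    (ε κ ᾱ C₀ : ℝ) (hε : 0 < ε) (hκ : 0 < κ) (hᾱ : 0 < ᾱ) (hC₀ : 0 < C₀)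
    (hEnn : ∀ w, 0 ≤ Ee w) (hDnn : ∀ w, 0 ≤ Dd w)
    (hacoer : ∀ w, ᾱ * Ee w ^ 2 ≤ a w w)
    (hbcoer : ∀ w, Dd w ^ 2 ≤ b w w)
    -- the jump estimate `‖[w]_{S_ε}‖_{L²(S_ε)} ≤ C₀ √ε ‖e(w)‖_{L²(Ω*_ε)}`
    (hjump : ∀ w, (∫ x, ‖J w x‖ ^ 2 ∂μ) ≤ (C₀ * Real.sqrt ε * Ee w) ^ 2)
    (hJsq : ∀ w, Integrable (fun x => ‖J w x‖ ^ 2) μ)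
    (G₁ G₂ : γ → ℝ)
    (hGsq : Integrable (fun x => (G₁ x - G₂ x) ^ 2) μ)
    (u₁ u₂ : H) (hu₁ : u₁ ∈ K) (hu₂ : u₂ ∈ K)
    (hI₁₁ : Integrable (fun x => G₁ x * ‖J u₁ x‖) μ)
    (hI₁₂ : Integrable (fun x => G₁ x * ‖J u₂ x‖) μ)
    (hI₂₁ : Integrable (fun x => G₂ x * ‖J u₁ x‖) μ)
    (hI₂₂ : Integrable (fun x => G₂ x * ‖J u₂ x‖) μ)
    -- the two variational inequalities with given frictions `G₁` and `G₂`
    (hVI₁ : ∀ v ∈ K, a u₁ (v - u₁) + κ * ε ^ 2 * b u₁ (v - u₁)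
        + (∫ x, G₁ x * (‖J v x‖ - ‖J u₁ x‖) ∂μ) ≥ f (v - u₁))
    (hVI₂ : ∀ v ∈ K, a u₂ (v - u₂) + κ * ε ^ 2 * b u₂ (v - u₂)
        + (∫ x, G₂ x * (‖J v x‖ - ‖J u₂ x‖) ∂μ) ≥ f (v - u₂)) :
    Real.sqrt (Ee (u₁ - u₂) ^ 2 + ε ^ 2 * Dd (u₁ - u₂) ^ 2)
      ≤ C₀ / min ᾱ κ * Real.sqrt ε * Real.sqrt (∫ x, (G₁ x - G₂ x) ^ 2 ∂μ) := by
  have h1 := hVI₁ u₂ hu₂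
  have h2 := hVI₂ u₁ hu₁
  -- bilinearity identities
  have ha : a u₁ (u₂ - u₁) + a u₂ (u₁ - u₂) = -(a (u₁ - u₂) (u₁ - u₂)) := by
    simp only [map_sub, LinearMap.sub_apply]; ring
  have hb : κ * ε ^ 2 * b u₁ (u₂ - u₁) + κ * ε ^ 2 * b u₂ (u₁ - u₂)
      = -(κ * ε ^ 2 * b (u₁ - u₂) (u₁ - u₂)) := by
    simp only [map_sub, LinearMap.sub_apply]; ring
  have hf : f (u₂ - u₁) + f (u₁ - u₂) = 0 := by
    simp only [map_sub]; ring
  -- integral identities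
  have e1 : (∫ x, G₁ x * (‖J u₂ x‖ - ‖J u₁ x‖) ∂μ)
      = (∫ x, G₁ x * ‖J u₂ x‖ ∂μ) - ∫ x, G₁ x * ‖J u₁ x‖ ∂μ := by
    simp_rw [mul_sub]; exact integral_sub hI₁₂ hI₁₁
  have e2 : (∫ x, G₂ x * (‖J u₁ x‖ - ‖J u₂ x‖) ∂μ)
      = (∫ x, G₂ x * ‖J u₁ x‖ ∂μ) - ∫ x, G₂ x * ‖J u₂ x‖ ∂μ := by
    simp_rw [mul_sub]; exact integral_sub hI₂₁ hI₂₂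
  have hpq : Integrable (fun x => (G₁ x - G₂ x) * (‖J u₂ x‖ - ‖J u₁ x‖)) μ := by
    have e : (fun x => (G₁ x - G₂ x) * (‖J u₂ x‖ - ‖J u₁ x‖))
        = fun x => (G₁ x * ‖J u₂ x‖ - G₁ x * ‖J u₁ x‖)
          - (G₂ x * ‖J u₂ x‖ - G₂ x * ‖J u₁ x‖) := funext fun x => by ring
    rw [e]
    have hi1 : Integrable (fun x => G₁ x * ‖J u₂ x‖ - G₁ x * ‖J u₁ x‖) μ := hI₁₂.sub hI₁₁
    have hi2 : Integrable (fun x => G₂ x * ‖J u₂ x‖ - G₂ x * ‖J u₁ x‖) μ := hI₂₂.sub hI₂₁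
    exact hi1.sub hi2
  have e3 : (∫ x, (G₁ x - G₂ x) * (‖J u₂ x‖ - ‖J u₁ x‖) ∂μ)
      = ((∫ x, G₁ x * ‖J u₂ x‖ ∂μ) - ∫ x, G₁ x * ‖J u₁ x‖ ∂μ)
        - ((∫ x, G₂ x * ‖J u₂ x‖ ∂μ) - ∫ x, G₂ x * ‖J u₁ x‖ ∂μ) := by
    have e : (fun x => (G₁ x - G₂ x) * (‖J u₂ x‖ - ‖J u₁ x‖))
        = fun x => (G₁ x * ‖J u₂ x‖ - G₁ x * ‖J u₁ x‖)
          - (G₂ x * ‖J u₂ x‖ - G₂ x * ‖J u₁ x‖) := funext fun x => by ring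
    have hi1 : Integrable (fun x => G₁ x * ‖J u₂ x‖ - G₁ x * ‖J u₁ x‖) μ := hI₁₂.sub hI₁₁
    have hi2 : Integrable (fun x => G₂ x * ‖J u₂ x‖ - G₂ x * ‖J u₁ x‖) μ := hI₂₂.sub hI₂₁
    rw [e, integral_sub hi1 hi2, integral_sub hI₁₂ hI₁₁, integral_sub hI₂₂ hI₂₁]
  -- summing the two variational inequalities
  have hsum : a (u₁ - u₂) (u₁ - u₂) + κ * ε ^ 2 * b (u₁ - u₂) (u₁ - u₂)
      ≤ ∫ x, (G₁ x - G₂ x) * (‖J u₂ x‖ - ‖J u₁ x‖) ∂μ := by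
    rw [e3]; rw [e1] at h1; rw [e2] at h2; linarith [ha, hb, hf, h1, h2]
  -- pointwise bound on the jump difference
  have hqb : ∀ x, (‖J u₂ x‖ - ‖J u₁ x‖) ^ 2 ≤ ‖J (u₁ - u₂) x‖ ^ 2 := by
    intro x
    have h := abs_norm_sub_norm_le (J u₂ x) (J u₁ x)
    have h2 : J u₂ x - J u₁ x = -(J (u₁ - u₂) x) := by
      simp only [map_sub, Pi.sub_apply]; abel
    calc (‖J u₂ x‖ - ‖J u₁ x‖) ^ 2 = |‖J u₂ x‖ - ‖J u₁ x‖| ^ 2 := (sq_abs _).symm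
      _ ≤ ‖J u₂ x - J u₁ x‖ ^ 2 := by
          exact pow_le_pow_left₀ (abs_nonneg _) h 2
      _ = ‖J (u₁ - u₂) x‖ ^ 2 := by rw [h2, norm_neg]
  -- measurability of jump norms
  have hms : ∀ v : H, AEStronglyMeasurable (fun x => ‖J v x‖) μ := by
    intro v
    have h := (hJsq v).aestronglyMeasurable
    have h2 := Real.continuous_sqrt.comp_aestronglyMeasurable h
    exact h2.congr (Filter.Eventually.of_forall fun x => Real.sqrt_sq (norm_nonneg _))
  have hq2int : Integrable (fun x => (‖J u₂ x‖ - ‖J u₁ x‖) ^ 2) μ := by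
    refine (hJsq (u₁ - u₂)).mono (((hms u₂).sub (hms u₁)).pow 2) ?_
    refine Filter.Eventually.of_forall fun x => ?_
    rw [Real.norm_eq_abs, Real.norm_eq_abs, abs_of_nonneg (sq_nonneg _),
      abs_of_nonneg (sq_nonneg _)]
    exact hqb x
  -- Cauchy-Schwarz + jump estimate
  set Ap := Real.sqrt (∫ x, (G₁ x - G₂ x) ^ 2 ∂μ) with hAp
  have hApnn : 0 ≤ Ap := Real.sqrt_nonneg _
  have hcs : (∫ x, (G₁ x - G₂ x) * (‖J u₂ x‖ - ‖J u₁ x‖) ∂μ)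
      ≤ Ap * (C₀ * Real.sqrt ε * Ee (u₁ - u₂)) := by
    have h := cs_int μ (fun x => G₁ x - G₂ x) (fun x => ‖J u₂ x‖ - ‖J u₁ x‖)
      hGsq hq2int hpq
    refine h.trans (mul_le_mul_of_nonneg_left ?_ hApnn)
    have hle : (∫ x, (‖J u₂ x‖ - ‖J u₁ x‖) ^ 2 ∂μ) ≤ (C₀ * Real.sqrt ε * Ee (u₁ - u₂)) ^ 2 :=
      (integral_mono hq2int (hJsq (u₁ - u₂)) fun x => hqb x).trans (hjump (u₁ - u₂))
    calc Real.sqrt (∫ x, (‖J u₂ x‖ - ‖J u₁ x‖) ^ 2 ∂μ)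
        ≤ Real.sqrt ((C₀ * Real.sqrt ε * Ee (u₁ - u₂)) ^ 2) := Real.sqrt_le_sqrt hle
      _ = C₀ * Real.sqrt ε * Ee (u₁ - u₂) := Real.sqrt_sq
          (mul_nonneg (by positivity) (hEnn _))
  -- combine
  set m := min ᾱ κ with hm
  have hmpos : 0 < m := lt_min hᾱ hκ
  set N := Real.sqrt (Ee (u₁ - u₂) ^ 2 + ε ^ 2 * Dd (u₁ - u₂) ^ 2) with hN
  have hNnn : 0 ≤ N := Real.sqrt_nonneg _
  have hN2 : N ^ 2 = Ee (u₁ - u₂) ^ 2 + ε ^ 2 * Dd (u₁ - u₂) ^ 2 := Real.sq_sqrt (by positivity)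
  have hEN : Ee (u₁ - u₂) ≤ N := by
    have h := Real.sqrt_le_sqrt (show Ee (u₁ - u₂) ^ 2 ≤ Ee (u₁ - u₂) ^ 2 + ε ^ 2 * Dd (u₁ - u₂) ^ 2 by
      nlinarith [sq_nonneg (Dd (u₁ - u₂)), sq_nonneg ε])
    rwa [Real.sqrt_sq (hEnn _)] at h
  have hchain : m * N ^ 2 ≤ Ap * (C₀ * Real.sqrt ε * N) := by
    have hc1 : m * N ^ 2 ≤ ᾱ * Ee (u₁ - u₂) ^ 2 + κ * (ε ^ 2 * Dd (u₁ - u₂) ^ 2) := by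
      rw [hN2]
      have h1' : m ≤ ᾱ := min_le_left _ _
      have h2' : m ≤ κ := min_le_right _ _
      nlinarith [sq_nonneg (Ee (u₁ - u₂)), sq_nonneg (Dd (u₁ - u₂)), sq_nonneg ε, mul_nonneg (sq_nonneg ε) (sq_nonneg (Dd (u₁ - u₂)))]
    have hc2 : ᾱ * Ee (u₁ - u₂) ^ 2 + κ * (ε ^ 2 * Dd (u₁ - u₂) ^ 2) ≤ a (u₁ - u₂) (u₁ - u₂) + κ * ε ^ 2 * b (u₁ - u₂) (u₁ - u₂) := by
      have h1' := hacoer (u₁ - u₂)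
      have h2' := mul_le_mul_of_nonneg_left (hbcoer (u₁ - u₂))
        (by positivity : (0:ℝ) ≤ κ * ε ^ 2)
      have e' : κ * (ε ^ 2 * Dd (u₁ - u₂) ^ 2) = κ * ε ^ 2 * Dd (u₁ - u₂) ^ 2 := by ring
      linarith
    have hc3 : Ap * (C₀ * Real.sqrt ε * Ee (u₁ - u₂)) ≤ Ap * (C₀ * Real.sqrt ε * N) := by
      apply mul_le_mul_of_nonneg_left _ hApnn
      exact mul_le_mul_of_nonneg_left hEN (by positivity)
    linarith [hsum, hcs]
  rcases eq_or_lt_of_le hNnn with hN0 | hN0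
  · rw [← hN0]
    positivity
  · have hdiv : m * N ≤ Ap * (C₀ * Real.sqrt ε) := by
      have h := hchain
      rw [pow_two] at h
      have : m * N * N ≤ Ap * (C₀ * Real.sqrt ε) * N := by
        calc m * N * N = m * (N * N) := by ring
          _ ≤ Ap * (C₀ * Real.sqrt ε * N) := h
          _ = Ap * (C₀ * Real.sqrt ε) * N := by ring
      exact le_of_mul_le_mul_right this hN0
    rw [div_mul_eq_mul_div, div_mul_eq_mul_div, le_div_iff₀ hmpos]
    calc N * m = m * N := by ring
      _ ≤ Ap * (C₀ * Real.sqrt ε) := hdiv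
      _ = C₀ * Real.sqrt ε * Ap := by ring
end
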